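/- Suppose c(·,t) solves the nonlocal diffusion equation with separable kernel ω(ξ,t) = φ(ξ) t^p for p > −1, where φ satisfies the non-advective constraint ∫_{-δ}^{δ} φ(ξ) ξ dξ = 0, and c has constant total mass C > 0. Then MSD(t) = MSD(0) + (t^{p+1}/(p+1)) · ∫_{-δ}^{δ} φ(ξ) ξ² dξ; in particular the mean squared displacement grows like t^{p+1}. -/

import Mathlib

open MeasureTheory intervalIntegral Real

/-- With a separable dynamic kernel ω(ξ,t) = φ(ξ) t^p (p > −1) satisfying the
non-advective constraint, the mean squared displacement grows like t^(p+1). -/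
theorem stmt_5 (δ : ℝ) (hδ : 0 < δ) (φ : ℝ → ℝ) (p : ℝ) (hp : -1 < p)
    (c : ℝ → ℝ → ℝ) (x₀ C : ℝ) (hC : 0 < C)
    (hφ : IntegrableOn φ (Set.Icc (-δ) δ))
    (hφ2 : IntegrableOn (fun ξ => φ ξ * ξ ^ 2) (Set.Icc (-δ) δ))
    (hconstraint : (∫ ξ in (-δ)..δ, φ ξ * ξ) = 0)
    (hint : ∀ t, Integrable (fun x => c x t))
    (hmom2 : ∀ t, Integrable (fun x => (x - x₀) ^ 2 * c x t))
    (hmass : ∀ t, (∫ x, c x t) = C)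
    (hpde : ∀ x : ℝ, ∀ t > (0 : ℝ), HasDerivAt (fun s => c x s)
      (t ^ p * ∫ ξ in (-δ)..δ, φ ξ * (c (x + ξ) t - c x t)) t)
    (hdiff : ∀ t > (0 : ℝ), HasDerivAt (fun s => ∫ x, (x - x₀) ^ 2 * c x s)
      (∫ x, (x - x₀) ^ 2 * (t ^ p * ∫ ξ in (-δ)..δ, φ ξ * (c (x + ξ) t - c x t))) t)
    (hfub : ∀ t > (0 : ℝ), IntegrableOn
      (fun q : ℝ × ℝ => (q.1 - x₀) ^ 2 * (φ q.2 * (c (q.1 + q.2) t - c q.1 t)))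
      (Set.univ ×ˢ Set.Icc (-δ) δ))
    (hcont : ContinuousWithinAt (fun t => (1 / C) * ∫ x, (x - x₀) ^ 2 * c x t)
      (Set.Ici 0) 0) :
    ∀ t : ℝ, 0 ≤ t → (1 / C) * (∫ x, (x - x₀) ^ 2 * c x t) =
      (1 / C) * (∫ x, (x - x₀) ^ 2 * c x 0) +
        (t ^ (p + 1) / (p + 1)) * ∫ ξ in (-δ)..δ, φ ξ * ξ ^ 2 := by
  have hδδ : (-δ : ℝ) ≤ δ := by linarith
  have hp1 : (0 : ℝ) < p + 1 := by linarith
  have hp1' : p + 1 ≠ 0 := ne_of_gt hp1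
  set K : ℝ := ∫ ξ in (-δ)..δ, φ ξ * ξ ^ 2 with hKdef
  -- first moment is integrable
  have hmom1 : ∀ s, Integrable (fun x => (x - x₀) * c x s) := by
    intro s
    refine Integrable.mono' ((hmom2 s).norm.add (hint s).norm)
      (((continuous_id.sub continuous_const).aestronglyMeasurable).mul
        (hint s).aestronglyMeasurable) ?_
    filter_upwards with x
    simp only [Real.norm_eq_abs, abs_mul, Pi.add_apply, abs_pow]
    nlinarith [sq_nonneg (|x - x₀| - 1), abs_nonneg (c x s), abs_nonneg (x - x₀)]
  -- integrability of shifted second moments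
  have hint2 : ∀ s (a : ℝ), Integrable (fun y => (y - a) ^ 2 * c y s) := by
    intro s a
    have h : (fun y => (y - a) ^ 2 * c y s) = fun y =>
        (x₀ - a) ^ 2 * c y s + (2 * (x₀ - a)) * ((y - x₀) * c y s) + (x₀ - x₀ + 1) * ((y - x₀) ^ 2 * c y s) := by
      funext y; ring
    rw [h]
    exact (((hint s).const_mul _).add ((hmom1 s).const_mul _)).add ((hmom2 s).const_mul _)
  -- inner x-integral computation
  have hinner : ∀ s (ξ : ℝ), (∫ x, (x - x₀) ^ 2 * (c (x + ξ) s - c x s)) =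
      ξ ^ 2 * C - (2 * ξ) * (∫ x, (x - x₀) * c x s) := by
    intro s ξ
    have htrans : (∫ x, (x - x₀) ^ 2 * c (x + ξ) s) = ∫ x, (x - (ξ + x₀)) ^ 2 * c x s := by
      have h := MeasureTheory.integral_add_right_eq_self
        (μ := (volume : Measure ℝ)) (fun y => (y - (ξ + x₀)) ^ 2 * c y s) ξ
      have h2 : (∫ x, (x + ξ - (ξ + x₀)) ^ 2 * c (x + ξ) s) = ∫ x, (x - (ξ + x₀)) ^ 2 * c x s := h
      rw [← h2]
      congr 1; funext x; ring_nf
    have hi1 : Integrable (fun x => (x - x₀) ^ 2 * c (x + ξ) s) := by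
      have h := (hint2 s (ξ + x₀)).comp_add_right ξ
      refine h.congr ?_
      filter_upwards with x
      ring_nf
    calc (∫ x, (x - x₀) ^ 2 * (c (x + ξ) s - c x s))
        = ∫ x, ((x - x₀) ^ 2 * c (x + ξ) s - (x - x₀) ^ 2 * c x s) := by
          congr 1; funext x; ring
      _ = (∫ x, (x - x₀) ^ 2 * c (x + ξ) s) - ∫ x, (x - x₀) ^ 2 * c x s :=
          integral_sub hi1 (hmom2 s)
      _ = (∫ x, (x - (ξ + x₀)) ^ 2 * c x s) - ∫ x, (x - x₀) ^ 2 * c x s := by rw [htrans]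
      _ = ∫ x, ((x - (ξ + x₀)) ^ 2 * c x s - (x - x₀) ^ 2 * c x s) :=
          (integral_sub (hint2 s (ξ + x₀)) (hmom2 s)).symm
      _ = ∫ x, (ξ ^ 2 * c x s - (2 * ξ) * ((x - x₀) * c x s)) := by
          congr 1; funext x; ring
      _ = ξ ^ 2 * (∫ x, c x s) - (2 * ξ) * (∫ x, (x - x₀) * c x s) := by
          rw [integral_sub ((hint s).const_mul _) ((hmom1 s).const_mul _),
            MeasureTheory.integral_const_mul, MeasureTheory.integral_const_mul]
      _ = ξ ^ 2 * C - (2 * ξ) * (∫ x, (x - x₀) * c x s) := by rw [hmass s]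
  -- integrability of φ ξ * ξ
  have hφ1 : IntegrableOn (fun ξ => φ ξ * ξ) (Set.Icc (-δ) δ) := by
    refine Integrable.mono' (hφ.norm.const_mul δ)
      (hφ.aestronglyMeasurable.mul aestronglyMeasurable_id) ?_
    filter_upwards [ae_restrict_mem measurableSet_Icc] with ξ hξ
    rw [norm_mul]
    have h1 : ‖ξ‖ ≤ δ := abs_le.mpr ⟨hξ.1, hξ.2⟩
    calc ‖φ ξ‖ * ‖ξ‖ ≤ ‖φ ξ‖ * δ := mul_le_mul_of_nonneg_left h1 (norm_nonneg _)
      _ = δ * ‖φ ξ‖ := mul_comm _ _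
  have hc1 : (∫ ξ in Set.Ioc (-δ) δ, φ ξ * ξ) = 0 := by
    rw [← intervalIntegral.integral_of_le hδδ]; exact hconstraint
  have hK2 : (∫ ξ in Set.Ioc (-δ) δ, φ ξ * ξ ^ 2) = K := (intervalIntegral.integral_of_le hδδ).symm
  -- the outer integral computation: the derivative value equals s ^ p * (C * K)
  have houter : ∀ s, 0 < s →
      (∫ x, (x - x₀) ^ 2 * (s ^ p * ∫ ξ in (-δ)..δ, φ ξ * (c (x + ξ) s - c x s)))
        = s ^ p * (C * K) := by
    intro s hs
    have step1 : (∫ x, (x - x₀) ^ 2 * (s ^ p * ∫ ξ in (-δ)..δ, φ ξ * (c (x + ξ) s - c x s)))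
        = s ^ p * ∫ x, (x - x₀) ^ 2 * ∫ ξ in (-δ)..δ, φ ξ * (c (x + ξ) s - c x s) := by
      rw [← MeasureTheory.integral_const_mul]
      congr 1; funext x; ring
    rw [step1]
    congr 1
    have hFub : Integrable
        (Function.uncurry fun x ξ => (x - x₀) ^ 2 * (φ ξ * (c (x + ξ) s - c x s)))
        ((volume : Measure ℝ).prod (volume.restrict (Set.Ioc (-δ) δ))) := by
      have h1 : IntegrableOn
          (fun q : ℝ × ℝ => (q.1 - x₀) ^ 2 * (φ q.2 * (c (q.1 + q.2) s - c q.1 s)))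
          (Set.univ ×ˢ Set.Ioc (-δ) δ) :=
        (hfub s hs).mono_set (Set.prod_mono_right Set.Ioc_subset_Icc_self)
      have h2 : (volume : Measure ℝ).prod (volume.restrict (Set.Ioc (-δ) δ))
          = ((volume : Measure ℝ).prod (volume : Measure ℝ)).restrict
              (Set.univ ×ˢ Set.Ioc (-δ) δ) := by
        rw [← Measure.prod_restrict, Measure.restrict_univ]
      rw [h2]
      rw [Measure.volume_eq_prod] at h1
      exact h1
    calc (∫ x, (x - x₀) ^ 2 * ∫ ξ in (-δ)..δ, φ ξ * (c (x + ξ) s - c x s))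
        = ∫ x, ∫ ξ in Set.Ioc (-δ) δ, (x - x₀) ^ 2 * (φ ξ * (c (x + ξ) s - c x s)) := by
          congr 1; funext x
          rw [intervalIntegral.integral_of_le hδδ, MeasureTheory.integral_const_mul]
      _ = ∫ ξ in Set.Ioc (-δ) δ, ∫ x, (x - x₀) ^ 2 * (φ ξ * (c (x + ξ) s - c x s)) :=
          integral_integral_swap hFub
      _ = ∫ ξ in Set.Ioc (-δ) δ, φ ξ * (ξ ^ 2 * C - (2 * ξ) * (∫ x, (x - x₀) * c x s)) := by
          congr 1; funext ξ
          rw [show (fun x => (x - x₀) ^ 2 * (φ ξ * (c (x + ξ) s - c x s)))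
              = fun x => φ ξ * ((x - x₀) ^ 2 * (c (x + ξ) s - c x s)) by funext x; ring]
          rw [MeasureTheory.integral_const_mul, hinner s ξ]
      _ = ∫ ξ in Set.Ioc (-δ) δ, (C * (φ ξ * ξ ^ 2)
            - (2 * (∫ x, (x - x₀) * c x s)) * (φ ξ * ξ)) := by
          congr 1; funext ξ; ring
      _ = C * (∫ ξ in Set.Ioc (-δ) δ, φ ξ * ξ ^ 2)
            - (2 * (∫ x, (x - x₀) * c x s)) * (∫ ξ in Set.Ioc (-δ) δ, φ ξ * ξ) := by
          rw [integral_sub (((hφ2.mono_set Set.Ioc_subset_Icc_self)).const_mul _)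
            (((hφ1.mono_set Set.Ioc_subset_Icc_self)).const_mul _),
            MeasureTheory.integral_const_mul, MeasureTheory.integral_const_mul]
      _ = C * K := by rw [hc1, hK2]; ring
  -- the auxiliary function that is constant in time
  set f : ℝ → ℝ := fun u => (1 / C) * (∫ x, (x - x₀) ^ 2 * c x u) - (u ^ (p + 1) / (p + 1)) * K
    with hfdef
  have hderiv : ∀ s : ℝ, 0 < s → HasDerivAt f 0 s := by
    intro s hs
    have h1 : HasDerivAt (fun u => (1 / C) * (∫ x, (x - x₀) ^ 2 * c x u))
        ((1 / C) * (s ^ p * (C * K))) s := by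
      have := (hdiff s hs).const_mul (1 / C)
      rwa [houter s hs] at this
    have h2 : HasDerivAt (fun u : ℝ => (u ^ (p + 1) / (p + 1)) * K)
        (s ^ p * K) s := by
      have h3 : HasDerivAt (fun u : ℝ => u ^ (p + 1)) ((p + 1) * s ^ (p + 1 - 1)) s :=
        Real.hasDerivAt_rpow_const (Or.inl (ne_of_gt hs))
      have h4 := (h3.div_const (p + 1)).mul_const K
      have h5 : (p + 1) * s ^ (p + 1 - 1) / (p + 1) * K = s ^ p * K := by
        rw [add_sub_cancel_right]
        field_simp
      rwa [h5] at h4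
    have h6 := h1.sub h2
    have h7 : (1 / C) * (s ^ p * (C * K)) - s ^ p * K = 0 := by
      field_simp
      ring
    rwa [h7] at h6
  -- f is constant on (0, ∞)
  have hconst : ∀ a b : ℝ, 0 < a → a ≤ b → f b = f a := by
    intro a b ha hab
    have hco : ContinuousOn f (Set.Icc a b) := by
      intro x hx
      exact (hderiv x (lt_of_lt_of_le ha hx.1)).continuousAt.continuousWithinAt
    have hd : ∀ x ∈ Set.Ico a b, HasDerivWithinAt f 0 (Set.Ici x) x := fun x hx =>
      (hderiv x (lt_of_lt_of_le ha hx.1)).hasDerivWithinAt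
    exact constant_of_has_deriv_right_zero hco hd b ⟨hab, le_refl b⟩
  -- continuity of f at 0 from the right
  have hf0 : ContinuousWithinAt f (Set.Ici 0) 0 := by
    apply ContinuousWithinAt.sub hcont
    have h1 : ContinuousAt (fun u : ℝ => (u ^ (p + 1) / (p + 1)) * K) 0 := by
      exact ((Real.continuousAt_rpow_const 0 (p + 1) (Or.inr (le_of_lt hp1))).div_const
        (p + 1)).mul continuousAt_const
    exact h1.continuousWithinAt
  -- conclude f t = f 0 for t > 0
  have hkey : ∀ t : ℝ, 0 < t → f t = f 0 := by
    intro t ht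
    have hT1 : Filter.Tendsto f (nhdsWithin 0 (Set.Ioi 0)) (nhds (f 0)) :=
      hf0.tendsto.mono_left (nhdsWithin_mono 0 Set.Ioi_subset_Ici_self)
    have hT2 : Filter.Tendsto f (nhdsWithin 0 (Set.Ioi 0)) (nhds (f t)) := by
      apply Filter.Tendsto.congr' _ (tendsto_const_nhds (x := f t))
      filter_upwards [Ioo_mem_nhdsGT_of_mem (Set.mem_Ico.mpr ⟨le_refl 0, ht⟩)] with s hs
      exact hconst s t hs.1 (le_of_lt hs.2)
    exact tendsto_nhds_unique hT2 hT1
  -- finish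
  intro t ht
  rcases eq_or_lt_of_le ht with h | h
  · rw [← h]
    rw [Real.zero_rpow hp1', zero_div, zero_mul, add_zero]
  · have h1 := hkey t h
    have h2 : (0 : ℝ) ^ (p + 1) = 0 := Real.zero_rpow hp1'
    simp only [hfdef, h2, zero_div, zero_mul, sub_zero] at h1
    linarith [h1]
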